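/- Let Δ ≥ 0, ε > 0, δ ∈ (0, 1/2), and let K ≥ 0 satisfy Q(K) = δ, where Q(x) = ∫_x^∞ exp(−u²/2)/√(2π) du. If σ ≥ (Δ/(2ε))·(K + √(K² + 2ε)), then for all m, m' ∈ ℝ with |m − m'| ≤ Δ and every measurable set S ⊆ ℝ, the Gaussian measures N(m, σ²) and N(m', σ²) satisfy N(m, σ²)(S) ≤ exp(ε)·N(m', σ²)(S) + δ. (The Gaussian mechanism with this standard deviation is (ε, δ)-differentially private.) -/

import Mathlib

open MeasureTheory Real

set_option maxHeartbeats 1000000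

/-- The Gaussian mechanism with standard deviation
`σ ≥ (Δ/(2ε))·(K + √(K² + 2ε))`, where `Q(K) = δ`, is `(ε, δ)`-differentially private. -/
theorem gaussian_mechanism_dp (Δ ε δ K σ : ℝ) (hΔ : 0 ≤ Δ) (hε : 0 < ε)
    (hδ : δ ∈ Set.Ioo (0 : ℝ) (1 / 2)) (hK : 0 ≤ K)
    (hQ : (∫ u in Set.Ioi K, Real.exp (-u ^ 2 / 2) / Real.sqrt (2 * Real.pi)) = δ)
    (hσ : Δ / (2 * ε) * (K + Real.sqrt (K ^ 2 + 2 * ε)) ≤ σ)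
    (m m' : ℝ) (hmm : |m - m'| ≤ Δ) (S : Set ℝ) (hS : MeasurableSet S) :
    (ProbabilityTheory.gaussianReal m ⟨σ ^ 2, sq_nonneg σ⟩) S ≤
      ENNReal.ofReal (Real.exp ε) *
        (ProbabilityTheory.gaussianReal m' ⟨σ ^ 2, sq_nonneg σ⟩) S +
        ENNReal.ofReal δ := by
  open ProbabilityTheory in
  set v : NNReal := ⟨σ ^ 2, sq_nonneg σ⟩ with hvdef
  by_cases hmm' : m = m'
  · subst hmm'
    have h1 : (gaussianReal m v) S ≤ ENNReal.ofReal (Real.exp ε) * (gaussianReal m v) S := by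
      conv_lhs => rw [← one_mul ((gaussianReal m v) S)]
      exact mul_le_mul_left (ENNReal.one_le_ofReal.2 (by nlinarith [Real.add_one_le_exp ε])) _
    exact le_trans h1 (le_add_right le_rfl)
  -- nontrivial case
  set t : ℝ := m - m' with htdef
  have ht0 : t ≠ 0 := sub_ne_zero.2 hmm'
  have htpos : 0 < |t| := abs_pos.2 ht0
  have hΔpos : 0 < Δ := lt_of_lt_of_le htpos hmm
  set s : ℝ := Real.sqrt (K ^ 2 + 2 * ε) with hsdef
  have hs0 : 0 ≤ s := Real.sqrt_nonneg _
  have hs2 : s ^ 2 = K ^ 2 + 2 * ε := Real.sq_sqrt (by positivity)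
  have hσ0 : 0 < σ := by
    have hspos : 0 < s := Real.sqrt_pos.2 (by positivity)
    have : 0 < Δ / (2 * ε) * (K + s) := by positivity
    linarith
  have hv0 : v ≠ 0 := by
    intro h
    have : (v : ℝ) = 0 := by rw [h]; simp
    rw [hvdef] at this
    change σ ^ 2 = 0 at this
    nlinarith
  have hvcoe : (v : ℝ) = σ ^ 2 := rfl
  -- key algebraic inequality
  have h1 : Δ * (K + s) ≤ 2 * ε * σ := by
    rw [div_mul_eq_mul_div, div_le_iff₀ (by positivity : (0:ℝ) < 2 * ε)] at hσ
    linarith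
  have hkey : 2 * K * Δ * σ + Δ ^ 2 ≤ 2 * ε * σ ^ 2 := by
    have f1 : 0 ≤ 2 * ε * σ - K * Δ - Δ * s := by linarith
    have f2 : 0 ≤ 2 * ε * σ - K * Δ + Δ * s := by nlinarith [mul_nonneg hΔpos.le hs0]
    nlinarith [mul_nonneg f1 f2]
  -- the "good" set
  set G : Set ℝ := {x | t * (2 * x - m - m') ≤ 2 * ε * σ ^ 2} with hGdef
  have hGmeas : MeasurableSet G := by
    apply measurableSet_le
    · fun_prop
    · fun_prop
  have h2ts : (0:ℝ) < 2 * |t| * σ := by positivity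
  set c : ℝ := (2 * ε * σ ^ 2 - t ^ 2) / (2 * |t| * σ) with hcdef
  have hc : c * (2 * |t| * σ) = 2 * ε * σ ^ 2 - t ^ 2 := div_mul_cancel₀ _ (ne_of_gt h2ts)
  have hcK : K ≤ c := by
    rw [hcdef, le_div_iff₀ h2ts]
    have habs2 : |t| ^ 2 = t ^ 2 := sq_abs t
    have htΔ : |t| ≤ Δ := hmm
    nlinarith [mul_le_mul htΔ htΔ (abs_nonneg t) hΔ,
      mul_nonneg (mul_nonneg hK hσ0.le) (sub_nonneg.2 htΔ)]
  -- scaling parameter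
  set a : ℝ := if 0 < t then σ else -σ with hadef
  have ha2 : a ^ 2 = σ ^ 2 := by rw [hadef]; split <;> ring
  have hta : t * a = |t| * σ := by
    rw [hadef]
    rcases lt_or_gt_of_ne ht0 with h | h
    · rw [if_neg (by linarith), abs_of_neg h]; ring
    · rw [if_pos h, abs_of_pos h]
  -- map of standard gaussian
  have hmap : (gaussianReal 0 1).map (fun x => a * x + m) = gaussianReal m v := by
    have hcomp : (fun x : ℝ => a * x + m) = (fun y => y + m) ∘ (fun x => a * x) := rfl
    have hveq : (NNReal.mk (a ^ 2) (sq_nonneg a)) * 1 = v := by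
      rw [mul_one]; ext; simp [hvcoe, ha2]
    rw [hcomp, ← Measure.map_map (measurable_add_const m) (measurable_const_mul a)]
    have h1' := gaussianReal_map_const_mul (μ := 0) (v := 1) a
    rw [mul_zero] at h1'
    rw [h1', hveq]
    have := gaussianReal_map_add_const (μ := 0) (v := v) m
    rwa [zero_add] at this
  -- the standard pdf equals the integrand of hQ
  have hpdf01 : ∀ u : ℝ, gaussianPDFReal 0 1 u = Real.exp (-u ^ 2 / 2) / Real.sqrt (2 * Real.pi) := by
    intro u
    simp only [gaussianPDFReal, NNReal.coe_one, mul_one, sub_zero]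
    rw [inv_mul_eq_div]
  -- Step B : measure of the bad set
  have hpre : (fun x => a * x + m) ⁻¹' Gᶜ = Set.Ioi c := by
    ext x
    simp only [Set.mem_preimage, Set.mem_compl_iff, hGdef, Set.mem_setOf_eq, not_le,
      Set.mem_Ioi]
    have hexp : t * (2 * (a * x + m) - m - m') = 2 * (|t| * σ) * x + t ^ 2 := by
      rw [← hta]; ring
    rw [hexp]
    constructor
    · intro h
      have h' : c * (2 * |t| * σ) < x * (2 * |t| * σ) := by nlinarith [hc]
      exact lt_of_mul_lt_mul_right h' h2ts.le
    · intro h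
      have h2 : c * (2 * |t| * σ) < x * (2 * |t| * σ) :=
        mul_lt_mul_of_pos_right h h2ts
      nlinarith [hc]
  have stepB : (gaussianReal m v) Gᶜ ≤ ENNReal.ofReal δ := by
    rw [← hmap, Measure.map_apply (by fun_prop) hGmeas.compl, hpre,
      gaussianReal_apply_eq_integral 0 one_ne_zero]
    apply ENNReal.ofReal_le_ofReal
    rw [← hQ]
    have hinteq : (fun u => Real.exp (-u ^ 2 / 2) / Real.sqrt (2 * Real.pi))
        = gaussianPDFReal 0 1 := by funext u; rw [hpdf01]
    rw [hinteq]
    refine setIntegral_mono_set ((integrable_gaussianPDFReal 0 1).integrableOn)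
      (Filter.Eventually.of_forall fun x => gaussianPDFReal_nonneg 0 1 x) ?_
    exact HasSubset.Subset.eventuallyLE (Set.Ioi_subset_Ioi hcK)
  -- Step A : density ratio on the good set
  have stepA : (gaussianReal m v) (S ∩ G) ≤
      ENNReal.ofReal (Real.exp ε) * (gaussianReal m' v) S := by
    have hpt : ∀ x ∈ S ∩ G,
        gaussianPDF m v x ≤ ENNReal.ofReal (Real.exp ε) * gaussianPDF m' v x := by
      intro x hx
      have hxG : t * (2 * x - m - m') ≤ 2 * ε * σ ^ 2 := hx.2
      rw [gaussianPDF, gaussianPDF, ← ENNReal.ofReal_mul (Real.exp_nonneg ε)]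
      apply ENNReal.ofReal_le_ofReal
      simp only [gaussianPDFReal, hvcoe]
      rw [mul_left_comm]
      apply mul_le_mul_of_nonneg_left _ (by positivity)
      rw [← Real.exp_add]
      apply Real.exp_le_exp.2
      have h2σ : (0:ℝ) < 2 * σ ^ 2 := by positivity
      have hfrac : t * (2 * x - m - m') / (2 * σ ^ 2) ≤ ε := by
        rw [div_le_iff₀ h2σ]; nlinarith
      have heq : -(x - m) ^ 2 / (2 * σ ^ 2)
          = -(x - m') ^ 2 / (2 * σ ^ 2) + t * (2 * x - m - m') / (2 * σ ^ 2) := by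
        field_simp; ring
      linarith
    calc (gaussianReal m v) (S ∩ G)
        = ∫⁻ x in S ∩ G, gaussianPDF m v x := gaussianReal_apply m hv0 _
      _ ≤ ∫⁻ x in S ∩ G, ENNReal.ofReal (Real.exp ε) * gaussianPDF m' v x :=
          setLIntegral_mono ((measurable_gaussianPDF m' v).const_mul _) hpt
      _ = ENNReal.ofReal (Real.exp ε) * ∫⁻ x in S ∩ G, gaussianPDF m' v x :=
          lintegral_const_mul _ (measurable_gaussianPDF m' v)
      _ = ENNReal.ofReal (Real.exp ε) * (gaussianReal m' v) (S ∩ G) := by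
          rw [gaussianReal_apply m' hv0]
      _ ≤ ENNReal.ofReal (Real.exp ε) * (gaussianReal m' v) S :=
          mul_le_mul_right (measure_mono Set.inter_subset_left) _
  calc (gaussianReal m v) S
      ≤ (gaussianReal m v) ((S ∩ G) ∪ Gᶜ) := by
        apply measure_mono
        intro x hx
        by_cases hxG : x ∈ G
        · exact Or.inl ⟨hx, hxG⟩
        · exact Or.inr hxG
    _ ≤ (gaussianReal m v) (S ∩ G) + (gaussianReal m v) Gᶜ := measure_union_le _ _
    _ ≤ ENNReal.ofReal (Real.exp ε) * (gaussianReal m' v) S + ENNReal.ofReal δ :=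
        add_le_add stepA stepB
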